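/- arXiv:1308.3530 — 2 statements merged into one kernel-verified Lean document; each statement's English description precedes it below -/
import Mathlib

section
/- Let G be a finite simple graph on [d] whose complement has nonempty connected components H_1, ..., H_m (ignoring isolated vertices). Then ε(K_d) − ε(G) = Σ_{j=1}^m (ε(K_d) − ε(K_d − H_j)), where K_d − H_j denotes K_d with the edges of H_j removed. -/
open Finset SimpleGraph

/-- A 4-cycle exists within the vertex set `s` of the graph `G`. -/
def fourCycleOn {V : Type*} (G : SimpleGraph V) (s : Set V) : Prop :=
  ∃ a b c d, a ∈ s ∧ b ∈ s ∧ c ∈ s ∧ d ∈ s ∧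
    a ≠ b ∧ a ≠ c ∧ a ≠ d ∧ b ≠ c ∧ b ≠ d ∧ c ≠ d ∧
    G.Adj a b ∧ G.Adj b c ∧ G.Adj c d ∧ G.Adj d a

/-- The pair of edges `{e,f}` spans an edge of the edge polytope: they share a
vertex, or they are disjoint and the induced subgraph on their endpoints has no 4-cycle. -/
def epPair {V : Type*} (G : SimpleGraph V) (e f : Sym2 V) : Prop :=
  (∃ v, v ∈ e ∧ v ∈ f) ∨
  ((¬ ∃ v, v ∈ e ∧ v ∈ f) ∧ ¬ fourCycleOn G {v | v ∈ e ∨ v ∈ f})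

open scoped Classical in
/-- The number of edges (1-dimensional faces) of the edge polytope of `G`:
the number of unordered pairs of distinct edges satisfying `epPair`. -/
noncomputable def epsilon {V : Type*} [Fintype V] (G : SimpleGraph V) : ℕ :=
  ((G.edgeFinset.powersetCard 2).filter
    (fun s => ∀ e ∈ s, ∀ f ∈ s, e ≠ f → epPair G e f)).card

open scoped Classical in
/-- number of 4-subsets inducing a path of length 3. -/
noncomputable def aCount {V : Type*} [Fintype V] (H : SimpleGraph V) : ℕ :=
  ((univ.powersetCard 4).filter (fun s => ∃ a b c d : V,
    s = {a, b, c, d} ∧ a ≠ b ∧ a ≠ c ∧ a ≠ d ∧ b ≠ c ∧ b ≠ d ∧ c ≠ d ∧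
    H.Adj a b ∧ H.Adj b c ∧ H.Adj c d ∧ ¬H.Adj a c ∧ ¬H.Adj a d ∧ ¬H.Adj b d)).card

open scoped Classical in
/-- number of 4-subsets inducing a cycle of length 4. -/
noncomputable def bCount {V : Type*} [Fintype V] (H : SimpleGraph V) : ℕ :=
  ((univ.powersetCard 4).filter (fun s => ∃ a b c d : V,
    s = {a, b, c, d} ∧ a ≠ b ∧ a ≠ c ∧ a ≠ d ∧ b ≠ c ∧ b ≠ d ∧ c ≠ d ∧
    H.Adj a b ∧ H.Adj b c ∧ H.Adj c d ∧ H.Adj d a ∧ ¬H.Adj a c ∧ ¬H.Adj b d)).card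

open scoped Classical in
/-- number of 4-subsets inducing a path of length 2 plus an isolated vertex. -/
noncomputable def cCount {V : Type*} [Fintype V] (H : SimpleGraph V) : ℕ :=
  ((univ.powersetCard 4).filter (fun s => ∃ a b c d : V,
    s = {a, b, c, d} ∧ a ≠ b ∧ a ≠ c ∧ a ≠ d ∧ b ≠ c ∧ b ≠ d ∧ c ≠ d ∧
    H.Adj a b ∧ H.Adj b c ∧ ¬H.Adj a c ∧ ¬H.Adj a d ∧ ¬H.Adj b d ∧ ¬H.Adj c d)).card

open scoped Classical in
/-- the number of triangles of `H`. -/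
noncomputable def k3 {V : Type*} [Fintype V] (H : SimpleGraph V) : ℕ :=
  ((univ.powersetCard 3).filter (fun s => ∀ i ∈ s, ∀ j ∈ s, i ≠ j → H.Adj i j)).card

open scoped Classical in
/-- the number of 3-subsets inducing a path with exactly two edges. -/
noncomputable def psi {V : Type*} [Fintype V] (H : SimpleGraph V) : ℕ :=
  ((univ.powersetCard 3).filter (fun s => ∃ a b c : V,
    s = {a, b, c} ∧ a ≠ b ∧ a ≠ c ∧ b ≠ c ∧ H.Adj a b ∧ H.Adj b c ∧ ¬H.Adj a c)).card

/-- the complete bipartite graph `K_{m,n}` on the vertex set `[d]`, with parts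
`{0,…,m-1}` and `{m,…,m+n-1}`. -/
def bip (d m n : ℕ) : SimpleGraph (Fin d) where
  Adj i j := ((i : ℕ) < m ∧ m ≤ (j : ℕ) ∧ (j : ℕ) < m + n) ∨
    ((j : ℕ) < m ∧ m ≤ (i : ℕ) ∧ (i : ℕ) < m + n)
  symm := ⟨by intro i j h; tauto⟩
  loopless := ⟨by intro i h; omega⟩

/-- the copy of `H` on the first `r` vertices of `[d]`. -/
def embedGraph {r : ℕ} (H : SimpleGraph (Fin r)) (d : ℕ) : SimpleGraph (Fin d) where
  Adj i j := ∃ (hi : (i : ℕ) < r) (hj : (j : ℕ) < r), H.Adj ⟨i, hi⟩ ⟨j, hj⟩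
  symm := ⟨by rintro i j ⟨hi, hj, h⟩; exact ⟨hj, hi, h.symm⟩⟩
  loopless := ⟨by rintro i ⟨hi, hj, h⟩; exact H.irrefl h⟩

/-- the subgraph of `H` consisting of the edges in the connected component `c`. -/
def compGraph {V : Type*} (H : SimpleGraph V) (c : H.ConnectedComponent) :
    SimpleGraph V where
  Adj i j := H.Adj i j ∧ H.connectedComponentMk i = c
  symm := ⟨by
    rintro i j ⟨h, hc⟩
    exact ⟨h.symm, (SimpleGraph.ConnectedComponent.sound h.symm.reachable).trans hc⟩⟩
  loopless := ⟨by rintro i ⟨h, _⟩; exact H.irrefl h⟩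

open scoped Classical in
/-- `|X_{i,j}|`: the number of vertices (other than `i, j`) adjacent to `i` but not `j`. -/
noncomputable def cardX {V : Type*} [Fintype V] (H : SimpleGraph V) (i j : V) : ℕ :=
  (univ.filter (fun ℓ => ℓ ≠ i ∧ ℓ ≠ j ∧ H.Adj i ℓ ∧ ¬ H.Adj j ℓ)).card


----------------------------------------------------------------
-- Auxiliary development (added for the proof)
----------------------------------------------------------------

section AuxDev

variable {V : Type*}

lemma finset_pair_eq {α : Type*} [DecidableEq α] {a b c d : α} :
    ({a,b} : Finset α) = {c,d} ↔ (a=c∧b=d)∨(a=d∧b=c) := by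
  rw [← Finset.coe_inj]; simp only [Finset.coe_insert, Finset.coe_singleton]
  exact Set.pair_eq_pair_iff

lemma sym2_exists (e : Sym2 V) : ∃ x y, e = s(x,y) := by
  induction e using Sym2.ind with
  | _ x y => exact ⟨x, y, rfl⟩

lemma endpoints_set {x y z w : V} :
    {v | v ∈ s(x,y) ∨ v ∈ s(z,w)} = ({x, y, z, w} : Set V) := by
  ext v
  simp [Sym2.mem_iff, Set.mem_insert_iff, or_assoc]

lemma fourCycleOn_iff {G : SimpleGraph V} {a b c d : V}
    (hab : a ≠ b) (hac : a ≠ c) (had : a ≠ d) (hbc : b ≠ c) (hbd : b ≠ d) (hcd : c ≠ d) :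
    fourCycleOn G {a, b, c, d} ↔
      (G.Adj a b ∧ G.Adj b c ∧ G.Adj c d ∧ G.Adj d a) ∨
      (G.Adj a b ∧ G.Adj b d ∧ G.Adj d c ∧ G.Adj c a) ∨
      (G.Adj a c ∧ G.Adj c b ∧ G.Adj b d ∧ G.Adj d a) := by
  constructor
  · rintro ⟨x, y, z, w, hx, hy, hz, hw, nxy, nxz, nxw, nyz, nyw, nzw, A1, A2, A3, A4⟩
    simp only [Set.mem_insert_iff, Set.mem_singleton_iff] at hx hy hz hw
    rcases hx with rfl|rfl|rfl|rfl <;> rcases hy with rfl|rfl|rfl|rfl <;>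
      rcases hz with rfl|rfl|rfl|rfl <;> rcases hw with rfl|rfl|rfl|rfl <;>
      simp_all [G.adj_comm]
  · rintro (⟨h1,h2,h3,h4⟩|⟨h1,h2,h3,h4⟩|⟨h1,h2,h3,h4⟩)
    · exact ⟨a,b,c,d, by simp, by simp, by simp, by simp, hab, hac, had, hbc, hbd, hcd, h1,h2,h3,h4⟩
    · exact ⟨a,b,d,c, by simp, by simp, by simp, by simp, hab, had, hac, hbd, hbc, hcd.symm, h1,h2,h3,h4⟩
    · exact ⟨a,c,b,d, by simp, by simp, by simp, by simp, hac, hab, had, hbc.symm, hcd, hbd, h1,h2,h3,h4⟩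

lemma epPair_comm {G : SimpleGraph V} {e f : Sym2 V} (h : epPair G e f) : epPair G f e := by
  have hs : {v | v ∈ f ∨ v ∈ e} = {v | v ∈ e ∨ v ∈ f} := by ext v; simp [or_comm]
  rcases h with ⟨v, h1, h2⟩ | ⟨h1, h2⟩
  · exact Or.inl ⟨v, h2, h1⟩
  · exact Or.inr ⟨fun ⟨v, a, b⟩ => h1 ⟨v, b, a⟩, by rw [hs]; exact h2⟩

open scoped Classical in
noncomputable def epsSet {d : ℕ} (G : SimpleGraph (Fin d)) : Finset (Finset (Sym2 (Fin d))) :=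
  (univ : Finset (Finset (Sym2 (Fin d)))).filter
    (fun p => ∃ e f, e ≠ f ∧ p = {e, f} ∧ e ∈ G.edgeSet ∧ f ∈ G.edgeSet ∧ epPair G e f)

open scoped Classical in
lemma mem_epsSet_iff {d : ℕ} {G : SimpleGraph (Fin d)} {p : Finset (Sym2 (Fin d))} :
    p ∈ epsSet G ↔
      ∃ e f, e ≠ f ∧ p = {e, f} ∧ e ∈ G.edgeSet ∧ f ∈ G.edgeSet ∧ epPair G e f := by
  classical
  simp [epsSet]

open scoped Classical in
lemma epsilon_eq_card {d : ℕ} (G : SimpleGraph (Fin d)) : epsilon G = (epsSet G).card := by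
  classical
  unfold epsilon
  congr 1
  ext p
  simp only [Finset.mem_filter, Finset.mem_powersetCard]
  rw [mem_epsSet_iff]
  constructor
  · rintro ⟨⟨hsub, hcard⟩, hcond⟩
    obtain ⟨e, f, hef, rfl⟩ := Finset.card_eq_two.mp hcard
    refine ⟨e, f, hef, rfl, ?_, ?_, ?_⟩
    · rw [← SimpleGraph.mem_edgeFinset]; exact hsub (by simp)
    · rw [← SimpleGraph.mem_edgeFinset]; exact hsub (by simp)
    · exact hcond e (by simp) f (by simp) hef
  · rintro ⟨e, f, hef, rfl, he, hf, hep⟩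
    refine ⟨⟨?_, ?_⟩, ?_⟩
    · intro x hx
      rcases Finset.mem_insert.mp hx with rfl | hx
      · rwa [SimpleGraph.mem_edgeFinset]
      · rw [Finset.mem_singleton] at hx; subst hx; rwa [SimpleGraph.mem_edgeFinset]
    · exact Finset.card_pair hef
    · intro e' he' f' hf' hne
      rcases Finset.mem_insert.mp he' with rfl | he' <;>
        [skip; (rw [Finset.mem_singleton] at he'; subst he')] <;>
      rcases Finset.mem_insert.mp hf' with rfl | hf' <;>
        first
        | exact absurd rfl hne
        | (first
            | (rw [Finset.mem_singleton] at hf'; subst hf')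
            | skip) <;>
          first
          | exact hep
          | exact epPair_comm hep
          | exact absurd rfl hne

lemma epPair_top_iff {e f : Sym2 V} (he : e ∈ (⊤ : SimpleGraph V).edgeSet)
    (hf : f ∈ (⊤ : SimpleGraph V).edgeSet) :
    epPair (⊤ : SimpleGraph V) e f ↔ ∃ v, v ∈ e ∧ v ∈ f := by
  constructor
  · rintro (h | ⟨hdisj, hcyc⟩)
    · exact h
    · exfalso
      obtain ⟨x, y, rfl⟩ := sym2_exists e
      obtain ⟨z, w, rfl⟩ := sym2_exists f
      rw [SimpleGraph.mem_edgeSet, SimpleGraph.top_adj] at he hf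
      have hxz : x ≠ z := fun h => hdisj ⟨x, by simp, by simp [h]⟩
      have hxw : x ≠ w := fun h => hdisj ⟨x, by simp, by simp [h]⟩
      have hyz : y ≠ z := fun h => hdisj ⟨y, by simp, by simp [h]⟩
      have hyw : y ≠ w := fun h => hdisj ⟨y, by simp, by simp [h]⟩
      rw [endpoints_set] at hcyc
      exact hcyc ⟨x, y, z, w, by simp, by simp, by simp, by simp,
        he, hxz, hxw, hyz, hyw, hf, he, hyz, hf, hxw.symm⟩
  · exact Or.inl

open scoped Classical in
noncomputable def sharePred {d : ℕ} (H : SimpleGraph (Fin d)) (p : Finset (Sym2 (Fin d))) : Prop :=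
  ∃ v a b : Fin d, p = {s(v,a), s(v,b)} ∧ v ≠ a ∧ v ≠ b ∧ a ≠ b ∧ (H.Adj v a ∨ H.Adj v b)

open scoped Classical in
noncomputable def crossPred {d : ℕ} (H : SimpleGraph (Fin d)) (p : Finset (Sym2 (Fin d))) : Prop :=
  ∃ x y z w : Fin d, p = {s(x,y), s(z,w)} ∧ x≠y ∧ x≠z ∧ x≠w ∧ y≠z ∧ y≠w ∧ z≠w ∧
    ¬H.Adj x y ∧ ¬H.Adj z w ∧ (H.Adj y z ∨ H.Adj x w) ∧ (H.Adj y w ∨ H.Adj x z)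

end AuxDev
section AuxDev2

variable {V : Type*}

open scoped Classical in
lemma epsSet_top_sdiff {d : ℕ} (H : SimpleGraph (Fin d)) :
    epsSet (⊤ : SimpleGraph (Fin d)) \ epsSet ((⊤ : SimpleGraph (Fin d)) \ H) =
      univ.filter (sharePred H) := by
  ext p
  rw [Finset.mem_sdiff, mem_epsSet_iff, mem_epsSet_iff, Finset.mem_filter]
  constructor
  · rintro ⟨⟨e, f, hef, rfl, he, hf, hep⟩, hnot⟩
    obtain ⟨v, hve, hvf⟩ := (epPair_top_iff he hf).mp hep
    obtain ⟨a, rfl⟩ := Sym2.mem_iff_exists.mp hve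
    obtain ⟨b, rfl⟩ := Sym2.mem_iff_exists.mp hvf
    rw [SimpleGraph.mem_edgeSet, SimpleGraph.top_adj] at he hf
    have hab : a ≠ b := fun h => hef (by rw [h])
    refine ⟨Finset.mem_univ _, v, a, b, rfl, he, hf, hab, ?_⟩
    by_contra hc
    push_neg at hc
    apply hnot
    refine ⟨s(v,a), s(v,b), hef, rfl, ?_, ?_, Or.inl ⟨v, by simp, by simp⟩⟩
    · rw [SimpleGraph.mem_edgeSet, SimpleGraph.sdiff_adj, SimpleGraph.top_adj]
      exact ⟨he, hc.1⟩
    · rw [SimpleGraph.mem_edgeSet, SimpleGraph.sdiff_adj, SimpleGraph.top_adj]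
      exact ⟨hf, hc.2⟩
  · rintro ⟨-, v, a, b, rfl, hva, hvb, hab, hH⟩
    have hef : s(v,a) ≠ s(v,b) := by
      intro h
      rcases Sym2.eq_iff.mp h with ⟨-, h2⟩ | ⟨h1, -⟩
      · exact hab h2
      · exact hvb h1
    refine ⟨⟨s(v,a), s(v,b), hef, rfl, ?_, ?_, Or.inl ⟨v, by simp, by simp⟩⟩, ?_⟩
    · rwa [SimpleGraph.mem_edgeSet, SimpleGraph.top_adj]
    · rwa [SimpleGraph.mem_edgeSet, SimpleGraph.top_adj]
    · rintro ⟨e', f', hef', hp, he', hf', -⟩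
      rcases finset_pair_eq.mp hp with ⟨h1, h2⟩ | ⟨h1, h2⟩ <;> subst h1 <;> subst h2 <;>
        rw [SimpleGraph.mem_edgeSet, SimpleGraph.sdiff_adj] at he' hf' <;> tauto

open scoped Classical in
lemma epsSet_sdiff_top {d : ℕ} (H : SimpleGraph (Fin d)) :
    epsSet ((⊤ : SimpleGraph (Fin d)) \ H) \ epsSet (⊤ : SimpleGraph (Fin d)) =
      univ.filter (crossPred H) := by
  have ladj : ∀ {a b : Fin d}, a ≠ b → ¬H.Adj a b → ((⊤ : SimpleGraph (Fin d)) \ H).Adj a b := by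
    intro a b h1 h2
    rw [SimpleGraph.sdiff_adj, SimpleGraph.top_adj]; exact ⟨h1, h2⟩
  have lnadj : ∀ {a b : Fin d}, ((⊤ : SimpleGraph (Fin d)) \ H).Adj a b → ¬H.Adj a b := by
    intro a b h
    rw [SimpleGraph.sdiff_adj] at h; exact h.2
  ext p
  rw [Finset.mem_sdiff, mem_epsSet_iff, mem_epsSet_iff, Finset.mem_filter]
  constructor
  · rintro ⟨⟨e, f, hef, rfl, he, hf, hep⟩, hnot⟩
    have he' : e ∈ (⊤ : SimpleGraph (Fin d)).edgeSet :=
      SimpleGraph.edgeSet_subset_edgeSet.mpr le_top he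
    have hf' : f ∈ (⊤ : SimpleGraph (Fin d)).edgeSet :=
      SimpleGraph.edgeSet_subset_edgeSet.mpr le_top hf
    have hdisj : ¬ ∃ v, v ∈ e ∧ v ∈ f := by
      intro hsh
      exact hnot ⟨e, f, hef, rfl, he', hf', (epPair_top_iff he' hf').mpr hsh⟩
    have hcyc : ¬ fourCycleOn ((⊤ : SimpleGraph (Fin d)) \ H) {v | v ∈ e ∨ v ∈ f} := by
      rcases hep with h | h
      · exact absurd h hdisj
      · exact h.2
    obtain ⟨x, y, rfl⟩ := sym2_exists e
    obtain ⟨z, w, rfl⟩ := sym2_exists f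
    rw [SimpleGraph.mem_edgeSet, SimpleGraph.sdiff_adj, SimpleGraph.top_adj] at he hf
    have hxz : x ≠ z := fun h => hdisj ⟨x, by simp, by simp [h]⟩
    have hxw : x ≠ w := fun h => hdisj ⟨x, by simp, by simp [h]⟩
    have hyz : y ≠ z := fun h => hdisj ⟨y, by simp, by simp [h]⟩
    have hyw : y ≠ w := fun h => hdisj ⟨y, by simp, by simp [h]⟩
    rw [endpoints_set, fourCycleOn_iff he.1 hxz hxw hyz hyw hf.1] at hcyc
    refine ⟨Finset.mem_univ _, x, y, z, w, rfl, he.1, hxz, hxw, hyz, hyw, hf.1,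
      he.2, hf.2, ?_, ?_⟩
    · by_contra hc
      push_neg at hc
      exact hcyc (Or.inl ⟨ladj he.1 he.2, ladj hyz hc.1, ladj hf.1 hf.2,
        ladj hxw.symm (fun h => hc.2 h.symm)⟩)
    · by_contra hc
      push_neg at hc
      exact hcyc (Or.inr (Or.inl ⟨ladj he.1 he.2, ladj hyw hc.1,
        ladj (Ne.symm hf.1) (fun h => hf.2 h.symm), ladj hxz.symm (fun h => hc.2 h.symm)⟩))
  · rintro ⟨-, x, y, z, w, rfl, hxy, hxz, hxw, hyz, hyw, hzw, hnxy, hnzw, h1, h2⟩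
    have hef : s(x,y) ≠ s(z,w) := by
      intro h
      rcases Sym2.eq_iff.mp h with ⟨h', -⟩ | ⟨h', -⟩
      · exact hxz h'
      · exact hxw h'
    have hdisj : ¬ ∃ v, v ∈ s(x,y) ∧ v ∈ s(z,w) := by
      rintro ⟨v, hv1, hv2⟩
      rw [Sym2.mem_iff] at hv1 hv2
      rcases hv1 with rfl | rfl <;> rcases hv2 with rfl | rfl
      exacts [hxz rfl, hxw rfl, hyz rfl, hyw rfl]
    constructor
    · refine ⟨s(x,y), s(z,w), hef, rfl, ?_, ?_, Or.inr ⟨hdisj, ?_⟩⟩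
      · rw [SimpleGraph.mem_edgeSet]; exact ladj hxy hnxy
      · rw [SimpleGraph.mem_edgeSet]; exact ladj hzw hnzw
      · rw [endpoints_set, fourCycleOn_iff hxy hxz hxw hyz hyw hzw]
        rintro (⟨-, hA, -, hB⟩ | ⟨-, hA, -, hB⟩ | ⟨hA, -, hB, -⟩)
        · rcases h1 with h | h
          exacts [lnadj hA h, lnadj hB h.symm]
        · rcases h2 with h | h
          exacts [lnadj hA h, lnadj hB h.symm]
        · rcases h2 with h | h
          exacts [lnadj hB h, lnadj hA h]
    · rintro ⟨e', f', hef', hp, he', hf', hep'⟩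
      obtain ⟨v, hv1, hv2⟩ := (epPair_top_iff he' hf').mp hep'
      rcases finset_pair_eq.mp hp with ⟨h1', h2'⟩ | ⟨h1', h2'⟩ <;> subst h1' <;> subst h2' <;>
        first
        | exact hdisj ⟨v, hv1, hv2⟩
        | exact hdisj ⟨v, hv2, hv1⟩

end AuxDev2
section AuxDev3

variable {V : Type*}

lemma int_card_sub {α : Type*} [DecidableEq α] (A B : Finset α) :
    (A.card : ℤ) - B.card = (A \ B).card - (B \ A).card := by
  have h1 := Finset.card_sdiff_add_card_inter A B
  have h2 := Finset.card_sdiff_add_card_inter B A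
  rw [Finset.inter_comm] at h2
  omega

open scoped Classical in
lemma eps_diff {d : ℕ} (H : SimpleGraph (Fin d)) :
    (epsilon (⊤ : SimpleGraph (Fin d)) : ℤ) - epsilon ((⊤ : SimpleGraph (Fin d)) \ H) =
      ((univ.filter (sharePred H)).card : ℤ) - (univ.filter (crossPred H)).card := by
  rw [epsilon_eq_card, epsilon_eq_card, int_card_sub, epsSet_top_sdiff, epsSet_sdiff_top]

lemma compGraph_le {H : SimpleGraph V} {c : H.ConnectedComponent} : compGraph H c ≤ H :=
  fun _ _ h => h.1

lemma compAdj_mk {H : SimpleGraph V} {c : H.ConnectedComponent} {i j : V}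
    (h : (compGraph H c).Adj i j) :
    H.connectedComponentMk i = c ∧ H.connectedComponentMk j = c :=
  ⟨h.2, (h.symm).2⟩

lemma compAdj_of_mk {H : SimpleGraph V} {c : H.ConnectedComponent} {i j : V}
    (h : H.Adj i j) (hm : H.connectedComponentMk i = c ∨ H.connectedComponentMk j = c) :
    (compGraph H c).Adj i j := by
  rcases hm with hm | hm
  · exact ⟨h, hm⟩
  · exact ((compGraph H c).adj_symm ⟨h.symm, hm⟩)

-- uniqueness of the shared vertex
lemma shared_vertex_eq [DecidableEq V] {v a b v' a' b' : V}
    (h : ({s(v,a), s(v,b)} : Finset (Sym2 V)) = {s(v',a'), s(v',b')})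
    (hab : a ≠ b) (h'ab : a' ≠ b') : v = v' := by
  classical
  have h1 : s(v,a) = s(v',a') ∨ s(v,a) = s(v',b') := by
    have hm : s(v,a) ∈ ({s(v',a'), s(v',b')} : Finset (Sym2 V)) := by rw [← h]; simp
    simpa using hm
  have h2 : s(v,b) = s(v',a') ∨ s(v,b) = s(v',b') := by
    have hm : s(v,b) ∈ ({s(v',a'), s(v',b')} : Finset (Sym2 V)) := by rw [← h]; simp
    simpa using hm
  have hv1 : v' ∈ s(v,a) := by rcases h1 with h' | h' <;> rw [h'] <;> simp
  have hv2 : v' ∈ s(v,b) := by rcases h2 with h' | h' <;> rw [h'] <;> simp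
  rw [Sym2.mem_iff] at hv1 hv2
  rcases hv1 with h' | h'
  · exact h'.symm
  · rcases hv2 with h'' | h''
    · exact h''.symm
    · exact absurd (h'.symm.trans h'') hab

open scoped Classical in
lemma share_decomp {d : ℕ} (G : SimpleGraph (Fin d)) :
    (univ.filter (sharePred Gᶜ)).card =
      ∑ c ∈ univ.filter (fun c : Gᶜ.ConnectedComponent => ∃ i j, (compGraph Gᶜ c).Adj i j),
        (univ.filter (sharePred (compGraph Gᶜ c))).card := by
  rw [← Finset.card_biUnion]
  · congr 1
    ext p
    simp only [Finset.mem_biUnion, Finset.mem_filter, Finset.mem_univ, true_and]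
    constructor
    · rintro ⟨v, a, b, rfl, hva, hvb, hab, hH⟩
      rcases hH with hH | hH
      · exact ⟨Gᶜ.connectedComponentMk v, ⟨v, a, ⟨hH, rfl⟩⟩,
          v, a, b, rfl, hva, hvb, hab, Or.inl ⟨hH, rfl⟩⟩
      · exact ⟨Gᶜ.connectedComponentMk v, ⟨v, b, ⟨hH, rfl⟩⟩,
          v, a, b, rfl, hva, hvb, hab, Or.inr ⟨hH, rfl⟩⟩
    · rintro ⟨c, -, v, a, b, rfl, hva, hvb, hab, hH⟩
      exact ⟨v, a, b, rfl, hva, hvb, hab, hH.imp And.left And.left⟩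
  · intro c hc c' hc' hne
    rw [Function.onFun, Finset.disjoint_left]
    rintro p hp hp'
    rw [Finset.mem_filter] at hp hp'
    obtain ⟨-, v, a, b, rfl, hva, hvb, hab, hH⟩ := hp
    obtain ⟨-, v', a', b', hp', h'va, h'vb, h'ab, hH'⟩ := hp'
    have hvv : v = v' := shared_vertex_eq hp' hab h'ab
    subst hvv
    have hc1 : Gᶜ.connectedComponentMk v = c := by
      rcases hH with h | h
      · exact h.2
      · exact h.2
    have hc2 : Gᶜ.connectedComponentMk v = c' := by
      rcases hH' with h | h
      · exact h.2
      · exact h.2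
    exact hne (hc1.symm.trans hc2)

lemma three_le_filter {α : Type*} [DecidableEq α] {S : Finset α} {P : α → Prop}
    [DecidablePred P] {u1 u2 u3 : α}
    (h12 : u1 ≠ u2) (h13 : u1 ≠ u3) (h23 : u2 ≠ u3)
    (m1 : u1 ∈ S) (m2 : u2 ∈ S) (m3 : u3 ∈ S) (p1 : P u1) (p2 : P u2) (p3 : P u3) :
    3 ≤ (S.filter P).card := by
  have hsub : ({u1, u2, u3} : Finset α) ⊆ S.filter P := by
    intro v hv
    simp only [Finset.mem_insert, Finset.mem_singleton] at hv
    rcases hv with rfl | rfl | rfl <;> rw [Finset.mem_filter] <;> exact ⟨by assumption, by assumption⟩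
  have hcard : ({u1, u2, u3} : Finset α).card = 3 := by
    rw [Finset.card_insert_of_notMem (by simp [h12, h13]),
      Finset.card_insert_of_notMem (by simp [h23]), Finset.card_singleton]
  calc 3 = ({u1, u2, u3} : Finset α).card := hcard.symm
    _ ≤ _ := Finset.card_le_card hsub

lemma mem_of_pair_eq [DecidableEq V] {e f e' f' : Sym2 V}
    (h : ({e, f} : Finset (Sym2 V)) = {e', f'}) (v : V) :
    (v ∈ e ∨ v ∈ f) ↔ (v ∈ e' ∨ v ∈ f') := by
  classical
  rcases finset_pair_eq.mp h with ⟨rfl, rfl⟩ | ⟨rfl, rfl⟩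
  · rfl
  · exact or_comm

lemma quad_eq [DecidableEq V] {x y z w x' y' z' w' : V}
    (h : ({s(x,y), s(z,w)} : Finset (Sym2 V)) = {s(x',y'), s(z',w')}) :
    ∀ v : V, (v = x ∨ v = y ∨ v = z ∨ v = w) ↔ (v = x' ∨ v = y' ∨ v = z' ∨ v = w') := by
  intro v
  have := mem_of_pair_eq h v
  simp only [Sym2.mem_iff] at this
  tauto

lemma cross_mk_three {H : SimpleGraph V} {c : H.ConnectedComponent} {x y z w : V}
    (hxy : x ≠ y) (hxz : x ≠ z) (hxw : x ≠ w) (hyz : y ≠ z) (hyw : y ≠ w) (hzw : z ≠ w)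
    (h1 : (compGraph H c).Adj y z ∨ (compGraph H c).Adj x w)
    (h2 : (compGraph H c).Adj y w ∨ (compGraph H c).Adj x z) :
    ∃ u1 u2 u3 : V, u1 ≠ u2 ∧ u1 ≠ u3 ∧ u2 ≠ u3 ∧
      (u1 = x ∨ u1 = y ∨ u1 = z ∨ u1 = w) ∧ (u2 = x ∨ u2 = y ∨ u2 = z ∨ u2 = w) ∧
      (u3 = x ∨ u3 = y ∨ u3 = z ∨ u3 = w) ∧
      H.connectedComponentMk u1 = c ∧ H.connectedComponentMk u2 = c ∧
      H.connectedComponentMk u3 = c := by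
  rcases h1 with h1 | h1 <;> rcases h2 with h2 | h2
  · exact ⟨y, z, w, hyz, hyw, hzw, by tauto, by tauto, by tauto,
      (compAdj_mk h1).1, (compAdj_mk h1).2, (compAdj_mk h2).2⟩
  · exact ⟨x, y, z, hxy, hxz, hyz, by tauto, by tauto, by tauto,
      (compAdj_mk h2).1, (compAdj_mk h1).1, (compAdj_mk h1).2⟩
  · exact ⟨x, y, w, hxy, hxw, hyw, by tauto, by tauto, by tauto,
      (compAdj_mk h1).1, (compAdj_mk h2).1, (compAdj_mk h2).2⟩
  · exact ⟨x, z, w, hxz, hxw, hzw, by tauto, by tauto, by tauto,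
      (compAdj_mk h1).1, (compAdj_mk h2).2, (compAdj_mk h1).2⟩

end AuxDev3
section AuxDev4

variable {V : Type*}

open scoped Classical in
lemma cross_decomp {d : ℕ} (G : SimpleGraph (Fin d)) :
    (univ.filter (crossPred Gᶜ)).card =
      ∑ c ∈ univ.filter (fun c : Gᶜ.ConnectedComponent => ∃ i j, (compGraph Gᶜ c).Adj i j),
        (univ.filter (crossPred (compGraph Gᶜ c))).card := by
  rw [← Finset.card_biUnion]
  · congr 1
    ext p
    simp only [Finset.mem_biUnion, Finset.mem_filter, Finset.mem_univ, true_and]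
    constructor
    · rintro ⟨x, y, z, w, rfl, hxy, hxz, hxw, hyz, hyw, hzw, hnxy, hnzw, h1, h2⟩
      rcases h1 with h1 | h1 <;> rcases h2 with h2 | h2
      · exact ⟨Gᶜ.connectedComponentMk y, ⟨y, z, ⟨h1, rfl⟩⟩,
          x, y, z, w, rfl, hxy, hxz, hxw, hyz, hyw, hzw,
          fun h => hnxy h.1, fun h => hnzw h.1, Or.inl ⟨h1, rfl⟩, Or.inl ⟨h2, rfl⟩⟩
      · exact ⟨Gᶜ.connectedComponentMk z, ⟨y, z, compAdj_of_mk h1 (Or.inr rfl)⟩,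
          x, y, z, w, rfl, hxy, hxz, hxw, hyz, hyw, hzw,
          fun h => hnxy h.1, fun h => hnzw h.1,
          Or.inl (compAdj_of_mk h1 (Or.inr rfl)), Or.inr (compAdj_of_mk h2 (Or.inr rfl))⟩
      · exact ⟨Gᶜ.connectedComponentMk w, ⟨x, w, compAdj_of_mk h1 (Or.inr rfl)⟩,
          x, y, z, w, rfl, hxy, hxz, hxw, hyz, hyw, hzw,
          fun h => hnxy h.1, fun h => hnzw h.1,
          Or.inr (compAdj_of_mk h1 (Or.inr rfl)), Or.inl (compAdj_of_mk h2 (Or.inr rfl))⟩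
      · exact ⟨Gᶜ.connectedComponentMk x, ⟨x, w, ⟨h1, rfl⟩⟩,
          x, y, z, w, rfl, hxy, hxz, hxw, hyz, hyw, hzw,
          fun h => hnxy h.1, fun h => hnzw h.1, Or.inr ⟨h1, rfl⟩, Or.inr ⟨h2, rfl⟩⟩
    · rintro ⟨c, -, x, y, z, w, rfl, hxy, hxz, hxw, hyz, hyw, hzw, hnxy, hnzw, h1, h2⟩
      refine ⟨x, y, z, w, rfl, hxy, hxz, hxw, hyz, hyw, hzw, ?_, ?_,
        h1.imp And.left And.left, h2.imp And.left And.left⟩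
      · intro hadj
        have hm : Gᶜ.connectedComponentMk y = c ∨ Gᶜ.connectedComponentMk x = c := by
          rcases h1 with h | h
          · exact Or.inl (compAdj_mk h).1
          · exact Or.inr (compAdj_mk h).1
        rcases hm with hm | hm
        · exact hnxy (compAdj_of_mk hadj (Or.inr hm))
        · exact hnxy (compAdj_of_mk hadj (Or.inl hm))
      · intro hadj
        have hm : Gᶜ.connectedComponentMk z = c ∨ Gᶜ.connectedComponentMk w = c := by
          rcases h1 with h | h
          · exact Or.inl (compAdj_mk h).2
          · exact Or.inr (compAdj_mk h).2
        rcases hm with hm | hm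
        · exact hnzw (compAdj_of_mk hadj (Or.inl hm))
        · exact hnzw (compAdj_of_mk hadj (Or.inr hm))
  · intro c hc c' hc' hne
    rw [Function.onFun, Finset.disjoint_left]
    rintro p hp hp'
    rw [Finset.mem_filter] at hp hp'
    obtain ⟨-, x, y, z, w, rfl, hxy, hxz, hxw, hyz, hyw, hzw, -, -, h1, h2⟩ := hp
    obtain ⟨-, x', y', z', w', hpq, h'xy, h'xz, h'xw, h'yz, h'yw, h'zw, -, -, h1', h2'⟩ := hp'
    have hq := quad_eq hpq
    obtain ⟨u1, u2, u3, h12, h13, h23, q1, q2, q3, m1, m2, m3⟩ :=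
      cross_mk_three hxy hxz hxw hyz hyw hzw h1 h2
    obtain ⟨u1', u2', u3', h12', h13', h23', q1', q2', q3', m1', m2', m3'⟩ :=
      cross_mk_three h'xy h'xz h'xw h'yz h'yw h'zw h1' h2'
    have q1'' := (hq u1').mpr q1'
    have q2'' := (hq u2').mpr q2'
    have q3'' := (hq u3').mpr q3'
    classical
    set S : Finset (Fin d) := {x, y, z, w} with hS
    have hmemS : ∀ v : Fin d, (v = x ∨ v = y ∨ v = z ∨ v = w) → v ∈ S := by
      intro v hv
      simp only [hS, Finset.mem_insert, Finset.mem_singleton]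
      exact hv
    set A := S.filter (fun v => Gᶜ.connectedComponentMk v = c) with hA
    set B := S.filter (fun v => Gᶜ.connectedComponentMk v = c') with hB
    have hAcard : 3 ≤ A.card :=
      three_le_filter h12 h13 h23 (hmemS _ q1) (hmemS _ q2) (hmemS _ q3) m1 m2 m3
    have hBcard : 3 ≤ B.card :=
      three_le_filter h12' h13' h23' (hmemS _ q1'') (hmemS _ q2'') (hmemS _ q3'') m1' m2' m3'
    have hsub : A ∪ B ⊆ S :=
      Finset.union_subset (Finset.filter_subset _ _) (Finset.filter_subset _ _)
    have hcard4 : S.card ≤ 4 := by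
      apply le_trans (Finset.card_insert_le _ _)
      have h3 : ({y, z, w} : Finset (Fin d)).card ≤ 3 := by
        apply le_trans (Finset.card_insert_le _ _)
        have h2c : ({z, w} : Finset (Fin d)).card ≤ 2 := by
          apply le_trans (Finset.card_insert_le _ _)
          simp
        omega
      omega
    have hun : (A ∪ B).card ≤ 4 := le_trans (Finset.card_le_card hsub) hcard4
    have hiu := Finset.card_union_add_card_inter A B
    have hpos : 0 < (A ∩ B).card := by omega
    obtain ⟨v, hv⟩ := Finset.card_pos.mp hpos
    rw [Finset.mem_inter, hA, hB, Finset.mem_filter, Finset.mem_filter] at hv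
    exact hne (hv.1.2.symm.trans hv.2.2)

end AuxDev4
set_option maxHeartbeats 1000000 in
open scoped Classical in
theorem epsilon_complement_components (d : ℕ) (G : SimpleGraph (Fin d)) :
    (epsilon (⊤ : SimpleGraph (Fin d)) : ℤ) - (epsilon G : ℤ) =
      ∑ c ∈ Finset.univ.filter
          (fun c : (Gᶜ).ConnectedComponent => ∃ i j, (compGraph Gᶜ c).Adj i j),
        ((epsilon (⊤ : SimpleGraph (Fin d)) : ℤ)
          - (epsilon ((⊤ : SimpleGraph (Fin d)) \ compGraph Gᶜ c) : ℤ)) := by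
  have hG : (⊤ : SimpleGraph (Fin d)) \ Gᶜ = G := by
    ext i j
    simp only [SimpleGraph.sdiff_adj, SimpleGraph.top_adj, SimpleGraph.compl_adj, not_and,
      not_not]
    constructor
    · rintro ⟨hne, h⟩
      exact h hne
    · intro h
      exact ⟨h.ne, fun _ => h⟩
  have key := eps_diff Gᶜ
  rw [hG] at key
  rw [key]
  have hsum : ∑ c ∈ Finset.univ.filter
          (fun c : (Gᶜ).ConnectedComponent => ∃ i j, (compGraph Gᶜ c).Adj i j),
        ((epsilon (⊤ : SimpleGraph (Fin d)) : ℤ)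
          - (epsilon ((⊤ : SimpleGraph (Fin d)) \ compGraph Gᶜ c) : ℤ)) =
      ∑ c ∈ Finset.univ.filter
          (fun c : (Gᶜ).ConnectedComponent => ∃ i j, (compGraph Gᶜ c).Adj i j),
        (((univ.filter (sharePred (compGraph Gᶜ c))).card : ℤ)
          - ((univ.filter (crossPred (compGraph Gᶜ c))).card : ℤ)) :=
    Finset.sum_congr rfl (fun c _ => eps_diff (compGraph Gᶜ c))
  rw [hsum]
  rw [Finset.sum_sub_distrib]
  rw [← Nat.cast_sum]
  rw [← Nat.cast_sum]
  rw [← share_decomp G]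
  rw [← cross_decomp G]
end

section
/- For real numbers x, y, z ≥ 0 with x + y + z = d − 2 − k (where d ≥ 2 and 0 ≤ k ≤ d−2), the quantity (x+y)/2 + xy/4 + yz/2 + zx/2 is at most (1/7)(d − 1 − k)², with the bound attained when x = y and x + y = (4/7)(d − 1 − k). -/
open Finset SimpleGraph

theorem optimization_inequality (d k : ℝ) (hd : 2 ≤ d) (hk0 : 0 ≤ k)
    (hk : k ≤ d - 2) :
    (∀ x y z : ℝ, 0 ≤ x → 0 ≤ y → 0 ≤ z → x + y + z = d - 2 - k →
      (x + y) / 2 + x * y / 4 + y * z / 2 + z * x / 2 ≤ (1 / 7) * (d - 1 - k) ^ 2)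
    ∧ (∀ x y z : ℝ, 0 ≤ x → 0 ≤ y → 0 ≤ z → x + y + z = d - 2 - k →
        x = y → x + y = (4 / 7) * (d - 1 - k) →
      (x + y) / 2 + x * y / 4 + y * z / 2 + z * x / 2 = (1 / 7) * (d - 1 - k) ^ 2) := by
  constructor
  · intro x y z hx hy hz hsum
    nlinarith [sq_nonneg (x - y), sq_nonneg (x + y - 4/7 * (d - 1 - k)), sq_nonneg (x+y), mul_nonneg hx hy]
  · intro x y z hx hy hz hsum hxy hs
    have hz' : z = d - 2 - k - (x + y) := by linarith
    subst hxy hz'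
    nlinarith [hs]
end
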